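/- arXiv:1001.1186 — 4 statements merged into one kernel-verified Lean document; each statement's English description precedes it below -/
import Mathlib

section
/- Let Ξ ⊂ F² be a finite set of distinct points, ≺ any term order, and Ξ' an A'-cartesian subset of Ξ. Then A' = N_≺(Ξ') ⊆ N_≺(Ξ): the lower set of the cartesian subset equals its Gröbner éscalier exponent set and is contained in the Gröbner éscalier exponent set of the full point set. -/
open MvPolynomial Finset

/-- A finite subset of ℕ² closed under componentwise decrease. -/
def IsLowerSet2 (A : Finset (ℕ × ℕ)) : Prop :=
  ∀ a ∈ A, ∀ b : ℕ × ℕ, b.1 ≤ a.1 → b.2 ≤ a.2 → b ∈ A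

/-- `Ξ` is `A`-cartesian: `Ξ = {(x i, y j) : (i,j) ∈ A}` for a lower set `A`,
with distinct `x i`'s and distinct `y j`'s (on the relevant indices). -/
def IsCartesianWith {F : Type*} [Field F] [DecidableEq F] (A : Finset (ℕ × ℕ)) (Ξ : Finset (F × F)) : Prop :=
  IsLowerSet2 A ∧ ∃ x y : ℕ → F,
    Set.InjOn x {i | ∃ j, (i, j) ∈ A} ∧ Set.InjOn y {j | ∃ i, (i, j) ∈ A} ∧
    Ξ = A.image fun ij => (x ij.1, y ij.2)

/-- `Ξ` is cartesian. -/
def IsCartesian {F : Type*} [Field F] [DecidableEq F] (Ξ : Finset (F × F)) : Prop :=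
  ∃ A, IsCartesianWith A Ξ

/-- Multiset of numbers of points of `Ξ` on the horizontal lines meeting `Ξ`. -/
def rowCounts {F : Type*} [Field F] [DecidableEq F] (Ξ : Finset (F × F)) : Multiset ℕ :=
  (Ξ.image Prod.snd).val.map fun b => (Ξ.filter fun p => p.2 = b).card

/-- Multiset of numbers of points of `Ξ` on the vertical lines meeting `Ξ`. -/
def colCounts {F : Type*} [Field F] [DecidableEq F] (Ξ : Finset (F × F)) : Multiset ℕ :=
  (Ξ.image Prod.fst).val.map fun a => (Ξ.filter fun p => p.1 = a).card

/-- Multiset of row lengths of a finite subset of ℕ². -/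
def rowCountsA (A : Finset (ℕ × ℕ)) : Multiset ℕ :=
  (A.image Prod.snd).val.map fun j => (A.filter fun p => p.2 = j).card

/-- Multiset of column heights of a finite subset of ℕ². -/
def colCountsA (A : Finset (ℕ × ℕ)) : Multiset ℕ :=
  (A.image Prod.fst).val.map fun i => (A.filter fun p => p.1 = i).card

/-- `A` is the lower set `S_x(Ξ)` obtained by covering `Ξ` by horizontal lines
ordered by (nonincreasing) numbers of points: a lower set whose rows have
exactly the same lengths as the horizontal sections of `Ξ`. -/
def IsSx {F : Type*} [Field F] [DecidableEq F] (Ξ : Finset (F × F)) (A : Finset (ℕ × ℕ)) : Prop :=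
  IsLowerSet2 A ∧ rowCountsA A = rowCounts Ξ

/-- `A` is the lower set `S_y(Ξ)` obtained by covering `Ξ` by vertical lines. -/
def IsSy {F : Type*} [Field F] [DecidableEq F] (Ξ : Finset (F × F)) (A : Finset (ℕ × ℕ)) : Prop :=
  IsLowerSet2 A ∧ colCountsA A = colCounts Ξ

/-- Evaluation of a bivariate polynomial at a point of `F²`. -/
noncomputable def evalAt {F : Type*} [Field F] (ξ : F × F) (p : MvPolynomial (Fin 2) F) : F :=
  MvPolynomial.eval ![ξ.1, ξ.2] p

/-- The span of the monomials `x^i y^j`, `(i,j) ∈ A`. -/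
noncomputable def monSpan (F : Type*) [Field F] (A : Finset (ℕ × ℕ)) :
    Submodule F (MvPolynomial (Fin 2) F) :=
  Submodule.span F ((fun ij : ℕ × ℕ => (X 0 : MvPolynomial (Fin 2) F) ^ ij.1 * X 1 ^ ij.2) '' A)

/-- The interpolation scheme `(Ξ, A)` is regular: every data on `Ξ` is matched by a
unique element of the span of the monomials indexed by `A`. -/
def IsRegularScheme {F : Type*} [Field F] (Ξ : Finset (F × F)) (A : Finset (ℕ × ℕ)) : Prop :=
  ∀ f : F × F → F, ∃! p : MvPolynomial (Fin 2) F,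
    p ∈ monSpan F A ∧ ∀ ξ ∈ Ξ, evalAt ξ p = f ξ

/-- The ideal of polynomials vanishing on `Ξ`. -/
noncomputable def vanishingIdeal (F : Type*) [Field F] (Ξ : Finset (F × F)) :
    Ideal (MvPolynomial (Fin 2) F) :=
  ⨅ ξ ∈ Ξ, RingHom.ker (MvPolynomial.eval ![(ξ : F × F).1, ξ.2])

/-- The `≺_lex`-leading exponent (x-exponent compared first), `⊥` for the zero polynomial. -/
noncomputable def lexDeg {F : Type*} [Field F] (p : MvPolynomial (Fin 2) F) :
    WithBot (ℕ ×ₗ ℕ) :=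
  (p.support.image fun d => toLex (d 0, d 1)).max

/-- `le` is a term order on bivariate exponents: a linear order compatible with
addition in which `(0,0)` is minimal. -/
def IsTermOrder2 (le : ℕ × ℕ → ℕ × ℕ → Prop) : Prop :=
  (∀ a b, le a b ∨ le b a) ∧ (∀ a b, le a b → le b a → a = b) ∧
    (∀ a b c, le a b → le b c → le a c) ∧ (∀ a, le (0, 0) a) ∧
    (∀ a b c : ℕ × ℕ, le a b → le (a.1 + c.1, a.2 + c.2) (b.1 + c.1, b.2 + c.2))

/-- The exponent set `N_≺(Ξ)` of the Gröbner éscalier of the vanishing ideal of `Ξ`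
w.r.t. the term order `le`: exponents `α` such that `x^α` is divisible by no
`le`-leading monomial of a nonzero element of `I(Ξ)`. -/
noncomputable def escalier (F : Type*) [Field F] (Ξ : Finset (F × F))
    (le : ℕ × ℕ → ℕ × ℕ → Prop) : Set (ℕ × ℕ) :=
  {α | ¬ ∃ g ∈ vanishingIdeal F Ξ, g ≠ 0 ∧ ∃ d ∈ g.support,
    (∀ e ∈ g.support, le ((e 0 : ℕ), (e 1 : ℕ)) ((d 0 : ℕ), (d 1 : ℕ))) ∧
    d 0 ≤ α.1 ∧ d 1 ≤ α.2}


section AuxLemmas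

open scoped Classical

variable {F : Type*} [Field F]

noncomputable def fs (ij : ℕ × ℕ) : Fin 2 →₀ ℕ := Finsupp.single 0 ij.1 + Finsupp.single 1 ij.2
@[simp] lemma fs_apply0 (ij : ℕ × ℕ) : fs ij 0 = ij.1 := by simp [fs, Finsupp.single_apply]
@[simp] lemma fs_apply1 (ij : ℕ × ℕ) : fs ij 1 = ij.2 := by simp [fs, Finsupp.single_apply]

lemma fin2_ext {s t : Fin 2 →₀ ℕ} (h0 : s 0 = t 0) (h1 : s 1 = t 1) : s = t := by
  ext a; fin_cases a <;> assumption

lemma fs_self (s : Fin 2 →₀ ℕ) : fs (s 0, s 1) = s := fin2_ext (by simp) (by simp)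

lemma monomial_fs (ij : ℕ × ℕ) (c : F) :
    (monomial (fs ij) c : MvPolynomial (Fin 2) F) = C c * X 0 ^ ij.1 * X 1 ^ ij.2 := by
  rw [fs, X_pow_eq_monomial, X_pow_eq_monomial, C_apply, monomial_mul, monomial_mul]
  simp

lemma eval_fs (ij : ℕ × ℕ) (c : F) (u v : F) :
    eval ![u, v] (monomial (fs ij) c : MvPolynomial (Fin 2) F) = c * u ^ ij.1 * v ^ ij.2 := by
  rw [monomial_fs]; simp

noncomputable def mpoly2 (p q : Polynomial F) : MvPolynomial (Fin 2) F :=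
  ∑ i ∈ Finset.range (p.natDegree + 1), ∑ j ∈ Finset.range (q.natDegree + 1),
    monomial (fs (i, j)) (p.coeff i * q.coeff j)

lemma coeff_mpoly2 (p q : Polynomial F) (s : Fin 2 →₀ ℕ) :
    coeff s (mpoly2 p q) = p.coeff (s 0) * q.coeff (s 1) := by
  rw [mpoly2]
  simp only [coeff_sum, coeff_monomial]
  rcases le_or_gt (s 0) p.natDegree with h0 | h0
  · rcases le_or_gt (s 1) q.natDegree with h1 | h1
    · rw [Finset.sum_eq_single (s 0)]
      · rw [Finset.sum_eq_single (s 1)]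
        · rw [if_pos]; exact (fs_self s).symm ▸ rfl
        · intro j hj hne
          rw [if_neg]
          intro he
          exact hne (by simpa using congrArg (fun t => t 1) he)
        · intro h; exact absurd (Finset.mem_range.2 (Nat.lt_succ_of_le h1)) h
      · intro i hi hne
        apply Finset.sum_eq_zero
        intro j hj
        rw [if_neg]
        intro he
        exact hne (by simpa using congrArg (fun t => t 0) he)
      · intro h; exact absurd (Finset.mem_range.2 (Nat.lt_succ_of_le h0)) h
    · rw [Polynomial.coeff_eq_zero_of_natDegree_lt h1, mul_zero]
      apply Finset.sum_eq_zero; intro i hi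
      apply Finset.sum_eq_zero; intro j hj
      rw [if_neg]
      intro he
      have : j = s 1 := by simpa using congrArg (fun t => t 1) he
      have := Finset.mem_range.1 hj
      omega
  · rw [Polynomial.coeff_eq_zero_of_natDegree_lt h0, zero_mul]
    apply Finset.sum_eq_zero; intro i hi
    apply Finset.sum_eq_zero; intro j hj
    rw [if_neg]
    intro he
    have : i = s 0 := by simpa using congrArg (fun t => t 0) he
    have := Finset.mem_range.1 hi
    omega

lemma eval_mpoly2 (p q : Polynomial F) (u v : F) :
    eval ![u, v] (mpoly2 p q) = p.eval u * q.eval v := by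
  rw [mpoly2, map_sum]
  rw [Polynomial.eval_eq_sum_range, Polynomial.eval_eq_sum_range, Finset.sum_mul_sum]
  apply Finset.sum_congr rfl
  intro i _
  rw [map_sum]
  apply Finset.sum_congr rfl
  intro j _
  rw [eval_fs]
  ring

lemma memVI {Ξ : Finset (F × F)} {g : MvPolynomial (Fin 2) F} :
    g ∈ vanishingIdeal F Ξ ↔ ∀ ξ ∈ Ξ, eval ![ξ.1, ξ.2] g = 0 := by
  simp only [_root_.vanishingIdeal, Ideal.mem_iInf, RingHom.mem_ker, Prod.forall]

lemma downward_mem_iff {S : Finset ℕ} (h : ∀ a ∈ S, ∀ b, b ≤ a → b ∈ S) (i : ℕ) :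
    i ∈ S ↔ i < S.card := by
  constructor
  · intro hi
    have hsub : Finset.range (i + 1) ⊆ S := fun b hb => h i hi b (by simpa using Nat.lt_succ_iff.1 (Finset.mem_range.1 hb))
    have := Finset.card_le_card hsub
    simpa using this
  · intro hi
    by_contra hn
    have hsub : S ⊆ Finset.range i := by
      intro a ha
      rw [Finset.mem_range]
      by_contra h2
      exact hn (h a ha i (by omega))
    have := Finset.card_le_card hsub
    simp at this; omega

/-- Key construction: for `β ∉ A'`, a polynomial vanishing on `Ξ'`, with coefficient 1
at `β` and support componentwise at most `β`. -/
lemma key_construction [DecidableEq F] {A' : Finset (ℕ × ℕ)} {Ξ' : Finset (F × F)}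
    (hcart : IsCartesianWith A' Ξ') {β : ℕ × ℕ} (hβ : β ∉ A') :
    ∃ m : MvPolynomial (Fin 2) F, m ∈ vanishingIdeal F Ξ' ∧ coeff (fs β) m = 1 ∧
      ∀ s ∈ m.support, s 0 ≤ β.1 ∧ s 1 ≤ β.2 := by
  obtain ⟨hlow, x, y, hx, hy, hΞ⟩ := hcart
  obtain ⟨a, b⟩ := β
  set S : Finset ℕ := (Finset.range a).filter (fun i => (i, b) ∈ A') with hS
  have hrow : ∀ i : ℕ, (i, b) ∈ A' ↔ i ∈ S := by
    intro i
    constructor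
    · intro hi
      rw [hS, Finset.mem_filter, Finset.mem_range]
      refine ⟨?_, hi⟩
      by_contra h
      exact hβ (hlow _ hi (a, b) (by omega) le_rfl)
    · intro hi; exact (Finset.mem_filter.1 hi).2
  have hdown : ∀ i ∈ S, ∀ i', i' ≤ i → i' ∈ S := by
    intro i hi i' hi'
    exact (hrow i').1 (hlow _ ((hrow i).2 hi) (i', b) hi' le_rfl)
  set c : ℕ := S.card with hc
  have hca : c ≤ a := by
    have := Finset.card_le_card (Finset.filter_subset (fun i => (i, b) ∈ A') (Finset.range a))
    simpa [hS, hc] using this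
  have hmemS : ∀ i, (i, b) ∈ A' ↔ i < c := fun i => (hrow i).trans (downward_mem_iff hdown i)
  set P : Polynomial F := Polynomial.X ^ (a - c) * ∏ i ∈ Finset.range c, (Polynomial.X - Polynomial.C (x i)) with hP
  set Q : Polynomial F := ∏ j ∈ Finset.range b, (Polynomial.X - Polynomial.C (y j)) with hQ
  have hPm : P.Monic := (Polynomial.monic_X_pow _).mul
    (Polynomial.monic_prod_of_monic _ _ fun i _ => Polynomial.monic_X_sub_C _)
  have hQm : Q.Monic := Polynomial.monic_prod_of_monic _ _ fun j _ => Polynomial.monic_X_sub_C _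
  have hPdeg : P.natDegree = a := by
    rw [hP, (Polynomial.monic_X_pow _).natDegree_mul
      (Polynomial.monic_prod_of_monic _ _ fun i _ => Polynomial.monic_X_sub_C _)]
    rw [Polynomial.natDegree_X_pow, Polynomial.natDegree_prod_of_monic _ _
      (fun i _ => Polynomial.monic_X_sub_C _)]
    simp [Polynomial.natDegree_X_sub_C]
    omega
  have hQdeg : Q.natDegree = b := by
    rw [hQ, Polynomial.natDegree_prod_of_monic _ _ (fun j _ => Polynomial.monic_X_sub_C _)]
    simp [Polynomial.natDegree_X_sub_C]
  refine ⟨mpoly2 P Q, ?_, ?_, ?_⟩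
  · rw [memVI]
    intro ξ hξ
    rw [hΞ, Finset.mem_image] at hξ
    obtain ⟨⟨i, j⟩, hij, rfl⟩ := hξ
    rw [eval_mpoly2]
    rcases lt_or_ge j b with hj | hj
    · have : Q.eval (y j) = 0 := by
        rw [hQ, Polynomial.eval_prod]
        exact Finset.prod_eq_zero (Finset.mem_range.2 hj) (by simp)
      simp [this]
    · have hib : (i, b) ∈ A' := hlow _ hij (i, b) le_rfl hj
      have hic : i < c := (hmemS i).1 hib
      have : P.eval (x i) = 0 := by
        rw [hP, Polynomial.eval_mul, Polynomial.eval_prod]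
        have : (∏ i' ∈ Finset.range c, ((Polynomial.X : Polynomial F) - Polynomial.C (x i')).eval (x i)) = 0 :=
          Finset.prod_eq_zero (Finset.mem_range.2 hic) (by simp)
        rw [this, mul_zero]
      simp [this]
  · rw [coeff_mpoly2]
    simp only [fs_apply0, fs_apply1]
    have h1 : P.coeff a = 1 := by
      have := hPm.coeff_natDegree
      rwa [hPdeg] at this
    have h2 : Q.coeff b = 1 := by
      have := hQm.coeff_natDegree
      rwa [hQdeg] at this
    rw [h1, h2, one_mul]
  · intro s hs
    rw [mem_support_iff, coeff_mpoly2] at hs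
    constructor
    · have : P.coeff (s 0) ≠ 0 := fun h => hs (by rw [h, zero_mul])
      have := Polynomial.le_natDegree_of_ne_zero this
      omega
    · have : Q.coeff (s 1) ≠ 0 := fun h => hs (by rw [h, mul_zero])
      have := Polynomial.le_natDegree_of_ne_zero this
      omega

/-- column polynomial: the univariate polynomial `v ↦ p(u, v)` -/
noncomputable def colP (p : MvPolynomial (Fin 2) F) (u : F) : Polynomial F :=
  ∑ s ∈ p.support, Polynomial.C (coeff s p * u ^ (s 0)) * Polynomial.X ^ (s 1)

lemma eval_colP (p : MvPolynomial (Fin 2) F) (u v : F) :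
    (colP p u).eval v = eval ![u, v] p := by
  rw [colP, eval_eq']
  rw [Polynomial.eval_finset_sum]
  apply Finset.sum_congr rfl
  intro s _
  rw [Fin.prod_univ_two]
  simp [mul_assoc]

lemma natDegree_colP_le (p : MvPolynomial (Fin 2) F) (u : F) (M : ℕ)
    (h : ∀ s ∈ p.support, s 1 ≤ M) : (colP p u).natDegree ≤ M := by
  apply Polynomial.natDegree_sum_le_of_forall_le
  intro s hs
  exact (Polynomial.natDegree_C_mul_X_pow_le _ _).trans (h s hs)

/-- row polynomial: coefficient of `Y^M`, as a polynomial in `X` -/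
noncomputable def rowP (p : MvPolynomial (Fin 2) F) (M : ℕ) : Polynomial F :=
  ∑ s ∈ p.support, if s 1 = M then Polynomial.C (coeff s p) * Polynomial.X ^ (s 0) else 0

lemma eval_rowP (p : MvPolynomial (Fin 2) F) (M : ℕ) (u : F) :
    (rowP p M).eval u = (colP p u).coeff M := by
  rw [rowP, colP, Polynomial.eval_finset_sum, Polynomial.finset_sum_coeff]
  apply Finset.sum_congr rfl
  intro s _
  rw [apply_ite (Polynomial.eval u), Polynomial.coeff_C_mul, Polynomial.coeff_X_pow]
  by_cases h : s 1 = M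
  · simp [h]
  · simp [h, Ne.symm h]

lemma coeff_rowP (p : MvPolynomial (Fin 2) F) (M i : ℕ) :
    (rowP p M).coeff i = coeff (fs (i, M)) p := by
  rw [rowP, Polynomial.finset_sum_coeff]
  rw [Finset.sum_eq_single (fs (i, M))]
  · simp
  · intro s hs hne
    by_cases h : s 1 = M
    · rw [if_pos h, Polynomial.coeff_C_mul, Polynomial.coeff_X_pow]
      rw [if_neg, mul_zero]
      intro hi
      exact hne (by rw [← fs_self s, h, hi])
    · rw [if_neg h, Polynomial.coeff_zero]
  · intro h
    simp [MvPolynomial.notMem_support_iff.1 h]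

/-- Interpolation uniqueness on a cartesian set: a polynomial with support in the
lower set `A'` vanishing at all points of the grid is zero. -/
lemma interp_injective (n : ℕ) (A' : Finset (ℕ × ℕ))
    (hn : A'.card ≤ n) (hlow : IsLowerSet2 A') (x y : ℕ → F)
    (hx : Set.InjOn x {i | ∃ j, (i, j) ∈ A'}) (hy : Set.InjOn y {j | ∃ i, (i, j) ∈ A'})
    (p : MvPolynomial (Fin 2) F)
    (hsupp : ∀ s ∈ p.support, ((s 0 : ℕ), (s 1 : ℕ)) ∈ A')
    (hvan : ∀ ij ∈ A', eval ![x ij.1, y ij.2] p = 0) : p = 0 := by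
  induction n generalizing A' p with
  | zero =>
    have : A' = ∅ := Finset.card_eq_zero.1 (Nat.le_zero.1 hn)
    subst this
    rw [← MvPolynomial.support_eq_empty]
    exact Finset.eq_empty_of_forall_notMem (fun s hs => by simpa using hsupp s hs)
  | succ n ih =>
    rcases A'.eq_empty_or_nonempty with rfl | hne
    · rw [← MvPolynomial.support_eq_empty]
      exact Finset.eq_empty_of_forall_notMem (fun s hs => by simpa using hsupp s hs)
    set M : ℕ := A'.sup (fun q => q.2) with hM
    obtain ⟨q, hqA, hMq⟩ := Finset.exists_mem_eq_sup A' hne (fun q => q.2)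
    have hq2 : q.2 = M := hMq.symm
    have hjle : ∀ ij ∈ A', ij.2 ≤ M := fun ij h => Finset.le_sup (f := fun q => q.2) h
    set S : Finset ℕ := (A'.filter (fun r => r.2 = M)).image Prod.fst with hS
    have hmemS : ∀ i : ℕ, i ∈ S ↔ (i, M) ∈ A' := by
      intro i
      rw [hS, Finset.mem_image]
      constructor
      · rintro ⟨r, hr, rfl⟩
        obtain ⟨hr1, hr2⟩ := Finset.mem_filter.1 hr
        rwa [← hr2, Prod.mk.eta]
      · intro h
        exact ⟨(i, M), Finset.mem_filter.2 ⟨h, rfl⟩, rfl⟩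
    have hdown : ∀ a ∈ S, ∀ b, b ≤ a → b ∈ S := by
      intro a ha b hb
      rw [hmemS] at *
      exact hlow _ ha (b, M) hb le_rfl
    set ρ : ℕ := S.card with hρ
    have hmemρ : ∀ i : ℕ, (i, M) ∈ A' ↔ i < ρ := fun i => (hmemS i).symm.trans (downward_mem_iff hdown i)
    have hρpos : 0 < ρ := by
      have : (q.1, M) ∈ A' := by rw [← hq2, Prod.mk.eta]; exact hqA
      have := (hmemρ q.1).1 this
      omega
    have hcol : ∀ i, i < ρ → colP p (x i) = 0 := by
      intro i hi
      apply Polynomial.eq_zero_of_natDegree_lt_card_of_eval_eq_zero' _ ((Finset.range (M+1)).image y)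
      · intro z hz
        obtain ⟨j, hj, rfl⟩ := Finset.mem_image.1 hz
        rw [Finset.mem_range] at hj
        have hij : (i, j) ∈ A' := hlow _ ((hmemρ i).2 hi) (i, j) le_rfl (by omega)
        rw [eval_colP]
        exact hvan (i, j) hij
      · have hcard : ((Finset.range (M+1)).image y).card = M + 1 := by
          rw [Finset.card_image_of_injOn, Finset.card_range]
          intro a ha b hb hab
          rw [Finset.coe_range, Set.mem_Iio] at ha hb
          refine hy ?_ ?_ hab
          · exact ⟨q.1, hlow _ hqA (q.1, a) le_rfl (by omega)⟩
          · exact ⟨q.1, hlow _ hqA (q.1, b) le_rfl (by omega)⟩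
        rw [hcard]
        exact Nat.lt_succ_of_le (natDegree_colP_le p _ M (fun s hs => by
          have := hjle _ (hsupp s hs); simpa using this))
    have hrow0 : rowP p M = 0 := by
      apply Polynomial.eq_zero_of_natDegree_lt_card_of_eval_eq_zero' _ ((Finset.range ρ).image x)
      · intro z hz
        obtain ⟨i, hi, rfl⟩ := Finset.mem_image.1 hz
        rw [Finset.mem_range] at hi
        rw [eval_rowP, hcol i hi, Polynomial.coeff_zero]
      · have hcard : ((Finset.range ρ).image x).card = ρ := by
          rw [Finset.card_image_of_injOn, Finset.card_range]
          intro a ha b hb hab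
          rw [Finset.coe_range, Set.mem_Iio] at ha hb
          exact hx ⟨M, (hmemρ a).2 ha⟩ ⟨M, (hmemρ b).2 hb⟩ hab
        rw [hcard]
        have : ∀ s ∈ p.support, s 1 = M → s 0 < ρ := by
          intro s hs h1
          rw [← hmemρ (s 0)]
          have := hsupp s hs
          rwa [h1] at this
        have hd : (rowP p M).natDegree ≤ ρ - 1 := by
          apply Polynomial.natDegree_sum_le_of_forall_le
          intro s hs
          by_cases h1 : s 1 = M
          · rw [if_pos h1]
            exact (Polynomial.natDegree_C_mul_X_pow_le _ _).trans (by have := this s hs h1; omega)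
          · rw [if_neg h1]; simp
        omega
    have htop : ∀ i : ℕ, coeff (fs (i, M)) p = 0 := by
      intro i
      rw [← coeff_rowP, hrow0, Polynomial.coeff_zero]
    set A'' : Finset (ℕ × ℕ) := A'.filter (fun r => r.2 ≠ M) with hA''
    have hsub : A'' ⊆ A' := Finset.filter_subset _ _
    have hcard : A''.card ≤ n := by
      have hss : A'' ⊂ A' := by
        refine Finset.ssubset_iff_of_subset hsub |>.2 ⟨(q.1, M), ?_, ?_⟩
        · rw [← hq2, Prod.mk.eta]; exact hqA
        · rw [hA'']; simp
      have := Finset.card_lt_card hss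
      omega
    have hlow'' : IsLowerSet2 A'' := by
      intro a ha b hb1 hb2
      obtain ⟨ha1, ha2⟩ := Finset.mem_filter.1 ha
      refine Finset.mem_filter.2 ⟨hlow _ ha1 b hb1 hb2, ?_⟩
      have := hjle a ha1
      simp only [ne_eq] at ha2 ⊢
      omega
    refine ih A'' hcard hlow'' (hx.mono ?_) (hy.mono ?_) p ?_ ?_
    · rintro i ⟨j, hj⟩; exact ⟨j, hsub hj⟩
    · rintro j ⟨i, hi⟩; exact ⟨i, hsub hi⟩
    · intro s hs
      have hA := hsupp s hs
      refine Finset.mem_filter.2 ⟨hA, ?_⟩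
      simp only [ne_eq]
      intro h1
      have : coeff s p = 0 := by
        conv_lhs => rw [← fs_self s, h1]
        exact htop (s 0)
      exact (MvPolynomial.mem_support_iff.1 hs) this
    · intro ij hij
      exact hvan ij (hsub hij)

namespace IsTermOrder2
variable {le : ℕ × ℕ → ℕ × ℕ → Prop} (h : IsTermOrder2 le)
include h

lemma refl (a : ℕ × ℕ) : le a a := (h.1 a a).elim id id
lemma antisymm {a b} : le a b → le b a → a = b := h.2.1 a b
lemma trans {a b c} : le a b → le b c → le a c := h.2.2.1 a b c
lemma total (a b) : le a b ∨ le b a := h.1 a b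
lemma of_comp {a b : ℕ × ℕ} (h1 : a.1 ≤ b.1) (h2 : a.2 ≤ b.2) : le a b := by
  have := h.2.2.2.2 (0, 0) (b.1 - a.1, b.2 - a.2) a (h.2.2.2.1 _)
  simp only [zero_add] at this
  rw [Nat.sub_add_cancel h1, Nat.sub_add_cancel h2] at this
  simpa using this

lemma exists_max (T : Finset (ℕ × ℕ)) (hT : T.Nonempty) : ∃ t ∈ T, ∀ a ∈ T, le a t := by
  classical
  induction T using Finset.induction_on with
  | empty => exact absurd hT (by simp)
  | @insert a T hnm ih =>
    rcases T.eq_empty_or_nonempty with rfl | hT'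
    · exact ⟨a, by simp, by simpa using h.refl a⟩
    · obtain ⟨t, htT, hmax⟩ := ih hT'
      rcases h.total a t with hat | hta
      · exact ⟨t, Finset.mem_insert_of_mem htT, by
          intro b hb
          rcases Finset.mem_insert.1 hb with rfl | hb
          · exact hat
          · exact hmax b hb⟩
      · exact ⟨a, Finset.mem_insert_self a T, by
          intro b hb
          rcases Finset.mem_insert.1 hb with rfl | hb
          · exact h.refl b
          · exact h.trans (hmax b hb) hta⟩

end IsTermOrder2

/-- Reduction: any polynomial supported below `d'` (w.r.t. the term order) splits as
an element of the vanishing ideal plus a polynomial supported in `A'`, without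
changing the coefficient at `d' ∈ A'`. -/
lemma reduction {F : Type*} [Field F] [DecidableEq F] {A' : Finset (ℕ × ℕ)} {Ξ' : Finset (F × F)}
    (hcart : IsCartesianWith A' Ξ') {le : ℕ × ℕ → ℕ × ℕ → Prop} (hle : IsTermOrder2 le)
    {d' : ℕ × ℕ} (hd' : d' ∈ A') (N : ℕ) :
    ∀ n (h : MvPolynomial (Fin 2) F),
      (∀ s ∈ h.support, s 0 ≤ N ∧ s 1 ≤ N) →
      (∀ s ∈ h.support, le ((s 0 : ℕ), (s 1 : ℕ)) d') →
      (((Finset.range (N+1) ×ˢ Finset.range (N+1)) \ A').filter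
        (fun δ => ∃ s ∈ h.support, ((s 0 : ℕ), (s 1 : ℕ)) ∉ A' ∧ le δ (s 0, s 1))).card ≤ n →
      ∃ u v : MvPolynomial (Fin 2) F, h = u + v ∧ u ∈ vanishingIdeal F Ξ' ∧
        (∀ s ∈ v.support, ((s 0 : ℕ), (s 1 : ℕ)) ∈ A') ∧ coeff (fs d') v = coeff (fs d') h := by
  intro n
  induction n with
  | zero =>
    intro h hbound horder hmeas
    by_cases hall : ∀ s ∈ h.support, ((s 0 : ℕ), (s 1 : ℕ)) ∈ A'
    · exact ⟨0, h, by rw [zero_add], Ideal.zero_mem _, hall, rfl⟩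
    · exfalso
      push_neg at hall
      obtain ⟨s, hs, hsA⟩ := hall
      have hmem : ((s 0 : ℕ), (s 1 : ℕ)) ∈ ((Finset.range (N+1) ×ˢ Finset.range (N+1)) \ A').filter
          (fun δ => ∃ s' ∈ h.support, ((s' 0 : ℕ), (s' 1 : ℕ)) ∉ A' ∧ le δ (s' 0, s' 1)) := by
        refine Finset.mem_filter.2 ⟨Finset.mem_sdiff.2 ⟨?_, hsA⟩, ⟨s, hs, hsA, hle.refl _⟩⟩
        have := hbound s hs
        rw [Finset.mem_product, Finset.mem_range, Finset.mem_range]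
        omega
      have := Finset.card_pos.2 ⟨_, hmem⟩
      omega
  | succ n ih =>
    intro h hbound horder hmeas
    by_cases hall : ∀ s ∈ h.support, ((s 0 : ℕ), (s 1 : ℕ)) ∈ A'
    · exact ⟨0, h, by rw [zero_add], Ideal.zero_mem _, hall, rfl⟩
    push_neg at hall
    -- choose the le-maximal bad exponent
    set T : Finset (ℕ × ℕ) := (h.support.filter (fun s => ((s 0 : ℕ), (s 1 : ℕ)) ∉ A')).image
      (fun s => ((s 0 : ℕ), (s 1 : ℕ))) with hT
    have hTne : T.Nonempty := by
      obtain ⟨s, hs, hsA⟩ := hall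
      exact ⟨_, Finset.mem_image.2 ⟨s, Finset.mem_filter.2 ⟨hs, hsA⟩, rfl⟩⟩
    obtain ⟨β, hβT, hβmax⟩ := hle.exists_max T hTne
    obtain ⟨s', hs', hs'β⟩ := Finset.mem_image.1 hβT
    obtain ⟨hs'supp, hs'A⟩ := Finset.mem_filter.1 hs'
    have hsstar : fs β = s' := by rw [← hs'β]; exact fs_self s'
    have hβA : β ∉ A' := by rw [← hs'β]; exact hs'A
    have hβd : le β d' := by rw [← hs'β]; exact horder s' hs'supp
    have hβN : β.1 ≤ N ∧ β.2 ≤ N := by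
      rw [← hs'β]; exact hbound s' hs'supp
    obtain ⟨m, hmI, hm1, hmsupp⟩ := key_construction hcart hβA
    set c : F := coeff (fs β) h with hc
    have hcne : c ≠ 0 := by
      rw [hc, hsstar]; exact MvPolynomial.mem_support_iff.1 hs'supp
    set h' : MvPolynomial (Fin 2) F := h - C c * m with hh'
    -- basic coefficient facts
    have hcoeff' : ∀ t, coeff t h' = coeff t h - c * coeff t m := by
      intro t; rw [hh', MvPolynomial.coeff_sub, MvPolynomial.coeff_C_mul]
    have hsupp' : ∀ t ∈ h'.support, t ∈ h.support ∨ t ∈ m.support := by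
      intro t ht
      by_contra hcon
      push_neg at hcon
      have h1 := MvPolynomial.notMem_support_iff.1 hcon.1
      have h2 := MvPolynomial.notMem_support_iff.1 hcon.2
      exact (MvPolynomial.mem_support_iff.1 ht) (by rw [hcoeff', h1, h2, mul_zero, sub_zero])
    have hzero' : coeff (fs β) h' = 0 := by
      rw [hcoeff', hm1, mul_one, hc, sub_self]
    have hmle : ∀ t ∈ m.support, le ((t 0 : ℕ), (t 1 : ℕ)) β := by
      intro t ht
      obtain ⟨h1, h2⟩ := hmsupp t ht
      exact hle.of_comp h1 h2
    -- invariants for h'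
    have hbound' : ∀ s ∈ h'.support, s 0 ≤ N ∧ s 1 ≤ N := by
      intro s hs
      rcases hsupp' s hs with hs | hs
      · exact hbound s hs
      · obtain ⟨h1, h2⟩ := hmsupp s hs
        omega
    have horder' : ∀ s ∈ h'.support, le ((s 0 : ℕ), (s 1 : ℕ)) d' := by
      intro s hs
      rcases hsupp' s hs with hs | hs
      · exact horder s hs
      · exact hle.trans (hmle s hs) hβd
    -- the measure decreases
    have hmeas' : (((Finset.range (N+1) ×ˢ Finset.range (N+1)) \ A').filter
        (fun δ => ∃ s ∈ h'.support, ((s 0 : ℕ), (s 1 : ℕ)) ∉ A' ∧ le δ (s 0, s 1))).card ≤ n := by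
      have hsubset : (((Finset.range (N+1) ×ˢ Finset.range (N+1)) \ A').filter
          (fun δ => ∃ s ∈ h'.support, ((s 0 : ℕ), (s 1 : ℕ)) ∉ A' ∧ le δ (s 0, s 1))) ⊆
          ((((Finset.range (N+1) ×ˢ Finset.range (N+1)) \ A').filter
          (fun δ => ∃ s ∈ h.support, ((s 0 : ℕ), (s 1 : ℕ)) ∉ A' ∧ le δ (s 0, s 1))).erase β) := by
        intro δ hδ
        obtain ⟨hδ1, s, hsupp'', hsA'', hδle⟩ := Finset.mem_filter.1 hδ
        have hsmem := hsupp' s hsupp''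
        rw [Finset.mem_erase]
        rcases hsmem with hsm | hsm
        · constructor
          · intro hδβ
            subst hδβ
            have hsT : ((s 0 : ℕ), (s 1 : ℕ)) ∈ T :=
              Finset.mem_image.2 ⟨s, Finset.mem_filter.2 ⟨hsm, hsA''⟩, rfl⟩
            have := hle.antisymm hδle (hβmax _ hsT)
            have hseq : s = fs δ := by rw [← fs_self s, ← this]
            rw [← hseq] at hzero'
            exact (MvPolynomial.mem_support_iff.1 hsupp'') hzero'
          · exact Finset.mem_filter.2 ⟨hδ1, s, hsm, hsA'', hδle⟩
        · have hsle : le ((s 0 : ℕ), (s 1 : ℕ)) β := hmle s hsm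
          constructor
          · intro hδβ
            subst hδβ
            have := hle.antisymm hδle hsle
            have hseq : s = fs δ := by rw [← fs_self s, ← this]
            rw [← hseq] at hzero'
            exact (MvPolynomial.mem_support_iff.1 hsupp'') hzero'
          · refine Finset.mem_filter.2 ⟨hδ1, fs β, ?_, ?_, by simpa using hle.trans hδle hsle⟩
            · rw [hsstar]; exact hs'supp
            · simpa using hβA
      have hβmem : β ∈ (((Finset.range (N+1) ×ˢ Finset.range (N+1)) \ A').filter
          (fun δ => ∃ s ∈ h.support, ((s 0 : ℕ), (s 1 : ℕ)) ∉ A' ∧ le δ (s 0, s 1))) := by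
        refine Finset.mem_filter.2 ⟨Finset.mem_sdiff.2 ⟨?_, hβA⟩, fs β, ?_, ?_, ?_⟩
        · rw [Finset.mem_product, Finset.mem_range, Finset.mem_range]; omega
        · rw [hsstar]; exact hs'supp
        · simpa using hβA
        · simpa using hle.refl β
      have h1 := Finset.card_le_card hsubset
      rw [Finset.card_erase_of_mem hβmem] at h1
      omega
    obtain ⟨u, v, huv, huI, hvsupp, hvd⟩ := ih h' hbound' horder' hmeas'
    refine ⟨u + C c * m, v, ?_, ?_, hvsupp, ?_⟩
    · rw [hh'] at huv
      rw [add_assoc, add_comm (C c * m) v, ← add_assoc, ← huv]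
      ring
    · exact Ideal.add_mem _ huI (Ideal.mul_mem_left _ _ hmI)
    · rw [hvd, hcoeff']
      have hmd : coeff (fs d') m = 0 := by
        by_contra hmd
        have hd := hmsupp (fs d') (MvPolynomial.mem_support_iff.2 hmd)
        simp only [fs_apply0, fs_apply1] at hd
        have : le d' β := hle.of_comp hd.1 hd.2
        have heq := hle.antisymm this hβd
        rw [← heq] at hβA
        exact hβA hd'
      rw [hmd, mul_zero, sub_zero]

end AuxLemmas

/-- If `Ξ'` is an `A'`-cartesian subset of `Ξ` and `≺` any term
order, then `A' = N_≺(Ξ') ⊆ N_≺(Ξ)`. -/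
theorem cartesian_subset_escalier {F : Type*} [Field F] [DecidableEq F]
    (Ξ Ξ' : Finset (F × F)) (A' : Finset (ℕ × ℕ))
    (le : ℕ × ℕ → ℕ × ℕ → Prop) (hle : IsTermOrder2 le)
    (hsub : Ξ' ⊆ Ξ) (hcart : IsCartesianWith A' Ξ') :
    (A' : Set (ℕ × ℕ)) = escalier F Ξ' le ∧ escalier F Ξ' le ⊆ escalier F Ξ le := by
  classical
  have hA'esc : (A' : Set (ℕ × ℕ)) = escalier F Ξ' le := by
    apply Set.Subset.antisymm
    · -- A' ⊆ escalier
      intro α hα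
      simp only [escalier, Set.mem_setOf_eq]
      rintro ⟨g, hgI, hgne, d, hd, hdmax, hd1, hd2⟩
      have hd'A : ((d 0 : ℕ), (d 1 : ℕ)) ∈ A' := hcart.1 α hα (d 0, d 1) hd1 hd2
      set N : ℕ := g.support.sup (fun s => max (s 0) (s 1)) with hN
      have hbound : ∀ s ∈ g.support, s 0 ≤ N ∧ s 1 ≤ N := by
        intro s hs
        have := Finset.le_sup (f := fun s : Fin 2 →₀ ℕ => max (s 0) (s 1)) hs
        exact ⟨le_trans (le_max_left _ _) this, le_trans (le_max_right _ _) this⟩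
      obtain ⟨u, v, huv, huI, hvsupp, hvd⟩ := reduction hcart hle hd'A N _ g hbound
        (fun s hs => hdmax s hs) le_rfl
      have hvI : v ∈ vanishingIdeal F Ξ' := by
        have : v = g - u := by rw [huv]; ring
        rw [this]
        exact Ideal.sub_mem _ hgI huI
      obtain ⟨hlow, x, y, hx, hy, hΞ⟩ := id hcart
      have hvvan : ∀ ij ∈ A', MvPolynomial.eval ![x ij.1, y ij.2] v = 0 := by
        intro ij hij
        have hmem : (x ij.1, y ij.2) ∈ Ξ' := by
          rw [hΞ]; exact Finset.mem_image.2 ⟨ij, hij, rfl⟩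
        have := memVI.1 hvI (x ij.1, y ij.2) hmem
        simpa using this
      have hv0 : v = 0 := interp_injective A'.card A' le_rfl hlow x y hx hy v hvsupp hvvan
      have : coeff (fs (d 0, d 1)) v = coeff (fs (d 0, d 1)) g := hvd
      rw [hv0, fs_self d] at this
      exact (MvPolynomial.mem_support_iff.1 hd) this.symm
    · -- escalier ⊆ A'
      intro α hα
      by_contra hαA
      obtain ⟨m, hmI, hm1, hmsupp⟩ := key_construction hcart hαA
      simp only [escalier, Set.mem_setOf_eq] at hα
      apply hα
      refine ⟨m, hmI, ?_, fs α, ?_, ?_, ?_, ?_⟩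
      · intro hm0
        rw [hm0] at hm1
        simp at hm1
      · exact MvPolynomial.mem_support_iff.2 (by rw [hm1]; exact one_ne_zero)
      · intro e he
        obtain ⟨h1, h2⟩ := hmsupp e he
        have := hle.of_comp (a := (e 0, e 1)) (b := ((fs α) 0, (fs α) 1)) (by simpa using h1) (by simpa using h2)
        exact this
      · simp
      · simp
  refine ⟨hA'esc, ?_⟩
  intro α hα
  simp only [escalier, Set.mem_setOf_eq] at hα ⊢
  rintro ⟨g, hgI, rest⟩
  refine hα ⟨g, ?_, rest⟩
  rw [memVI] at hgI ⊢
  exact fun ξ hξ => hgI ξ (hsub hξ)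
end

section
/- Let Ξ' ⊂ F² be a cartesian set whose lower set S_x(Ξ') = L_x(m_0,…,m_{n_0}) satisfies n_0 = n_1 = ⋯ = n_{m_{n_0}} (all columns up to the shortest-row length have full height), and let A = {(x̄^{(0)},ȳ),…,(x̄^{(k)},ȳ)} be a set of k+1 points on a new horizontal line with ȳ distinct from all ordinates of Ξ', k ≤ m_{n_0}, and each abscissa x̄^{(i)} equal to some abscissa occurring in the shortest row of Ξ'. Then Ξ' ∪ A is cartesian. -/
open MvPolynomial Finset

lemma downward_closed_eq_range (S : Finset ℕ) (h : ∀ i ∈ S, ∀ i' ≤ i, i' ∈ S) :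
    S = Finset.range S.card := by
  have h1 : ∀ i ∈ S, i < S.card := by
    intro i hi
    have : Finset.range (i+1) ⊆ S := fun j hj => h i hi j (Nat.lt_succ_iff.mp (mem_range.mp hj))
    have := Finset.card_le_card this
    simpa [Finset.card_range] using this
  apply Finset.eq_of_subset_of_card_le
  · intro i hi; exact mem_range.mpr (h1 i hi)
  · simp

noncomputable def listSel {α : Type*} (l : List α) (f : ℕ → α) (i : ℕ) : α :=
  if h : i < l.length then l.get ⟨i, h⟩ else f i

lemma listSel_injOn_range {α : Type*} (l : List α) (hnd : l.Nodup) (f : ℕ → α) :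
    Set.InjOn (listSel l f) {i | i < l.length} := by
  intro i hi j hj hij
  simp only [Set.mem_setOf_eq] at hi hj
  unfold listSel at hij
  rw [dif_pos hi, dif_pos hj] at hij
  have := (List.Nodup.get_inj_iff hnd).mp hij
  exact congrArg Fin.val this

lemma listSel_image_range {α : Type*} [DecidableEq α] (l : List α) (f : ℕ → α) (k : ℕ)
    (hk : k ≤ l.length) :
    (range k).image (listSel l f) = (l.take k).toFinset := by
  ext a
  simp only [mem_image, mem_range, List.mem_toFinset]
  constructor
  · rintro ⟨i, hi, rfl⟩
    have hil : i < l.length := lt_of_lt_of_le hi hk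
    rw [listSel, dif_pos hil]
    exact (List.mem_take_iff_getElem).mpr ⟨i, by simpa [lt_min_iff] using ⟨hi, hil⟩, by simp⟩
  · intro ha
    obtain ⟨i, hi, rfl⟩ := List.mem_take_iff_getElem.mp ha
    have hik : i < k := lt_of_lt_of_le hi (min_le_left _ _)
    have hil : i < l.length := lt_of_lt_of_le hi (min_le_right _ _)
    exact ⟨i, hik, by rw [listSel, dif_pos hil]; simp⟩

lemma listSel_eq {α : Type*} (l : List α) (f : ℕ → α) (i : ℕ) (h : ¬ i < l.length) :
    listSel l f i = f i := dif_neg h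


lemma single_row_cartesian {F : Type*} [Field F] [DecidableEq F] (A : Finset F) (ybar : F) :
    IsCartesian (A.image fun xb => (xb, ybar)) := by
  refine ⟨(range A.card).image (fun i => (i, 0)), ?_, listSel A.toList (fun _ => ybar),
    fun _ => ybar, ?_, ?_, ?_⟩
  · rintro ⟨a1, a2⟩ ha ⟨b1, b2⟩ hb1 hb2
    simp only [mem_image, mem_range, Prod.mk.injEq] at ha ⊢
    obtain ⟨i, hi, rfl, rfl⟩ := ha
    exact ⟨b1, lt_of_le_of_lt hb1 hi, rfl, (Nat.le_zero.mp hb2).symm⟩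
  · have : {i | ∃ j, (i, j) ∈ (range A.card).image (fun i => (i, 0))} = {i | i < A.toList.length} := by
      ext i
      simp only [Set.mem_setOf_eq, mem_image, mem_range, Prod.ext_iff, Finset.length_toList]
      constructor
      · rintro ⟨j, a, ha, rfl, rfl⟩; exact ha
      · intro h; exact ⟨0, i, h, rfl, rfl⟩
    rw [this]
    exact listSel_injOn_range _ A.nodup_toList _
  · intro j hj j' hj' _
    simp only [Set.mem_setOf_eq, mem_image, mem_range, Prod.ext_iff] at hj hj'
    obtain ⟨_, _, _, _, h⟩ := hj
    obtain ⟨_, _, _, _, h'⟩ := hj'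
    omega
  · rw [Finset.image_image]
    have h1 : (range A.card).image (listSel A.toList (fun _ => ybar)) = A := by
      rw [show A.card = A.toList.length from (Finset.length_toList A).symm,
        listSel_image_range _ _ _ le_rfl, List.take_length, Finset.toList_toFinset]
    calc A.image (fun xb => (xb, ybar))
        = ((range A.card).image (listSel A.toList (fun _ => ybar))).image (fun a => (a, ybar)) := by
          rw [h1]
      _ = (range A.card).image ((fun a => (a, ybar)) ∘ (listSel A.toList (fun _ => ybar))) := by
          rw [Finset.image_image]
      _ = _ := rfl


/-- Let `Ξ'` be a cartesian set and `ȳ` an ordinate not occurring in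
`Ξ'`. If `A` is a non-empty set of abscissae, each occurring on every horizontal line
of `Ξ'` (i.e. occurring in the shortest row, by nestedness), and `#A` does not exceed
the number of points on any line of `Ξ'`, then adjoining the row
`{(xb, ȳ) : xb ∈ A}` to `Ξ'` again gives a cartesian set. -/
theorem union_row_cartesian {F : Type*} [Field F] [DecidableEq F]
    (Ξ' : Finset (F × F)) (hΞ' : IsCartesian Ξ')
    (ybar : F) (A : Finset F) (hAne : A.Nonempty)
    (hy : ∀ p ∈ Ξ', p.2 ≠ ybar)
    (hA : ∀ xb ∈ A, ∀ y' : F, (∃ x', (x', y') ∈ Ξ') → (xb, y') ∈ Ξ')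
    (hcard : ∀ b ∈ Ξ'.image Prod.snd, A.card ≤ (Ξ'.filter fun p => p.2 = b).card) :
    IsCartesian (Ξ' ∪ A.image fun xb => (xb, ybar)) := by
  obtain ⟨B, hBlow, x, y, hxinj, hyinj, hΞeq⟩ := hΞ'
  rcases Ξ'.eq_empty_or_nonempty with hE | hne
  · rw [hE, Finset.empty_union]
    exact single_row_cartesian A ybar
  -- main case: Ξ' nonempty
  have hBne : B.Nonempty := by
    rw [hΞeq] at hne; exact Finset.image_nonempty.mp hne
  set J := (B.image Prod.snd).max' (hBne.image _) with hJdef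
  have hJmem : J ∈ B.image Prod.snd := Finset.max'_mem _ _
  have hJle : ∀ j ∈ B.image Prod.snd, j ≤ J := fun j hj => Finset.le_max' _ j hj
  obtain ⟨p0, hp0, hp02⟩ := Finset.mem_image.mp hJmem
  set R := (B.filter (fun p => p.2 = J)).image Prod.fst with hRdef
  have hRmem : ∀ i, i ∈ R ↔ (i, J) ∈ B := by
    intro i
    simp only [hRdef, mem_image, mem_filter]
    constructor
    · rintro ⟨⟨a, b⟩, ⟨hab, rfl⟩, rfl⟩; exact hab
    · intro h; exact ⟨(i, J), ⟨h, rfl⟩, rfl⟩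
  set r := R.card with hrdef
  have hRrange : R = range r :=
    downward_closed_eq_range R (fun i hi i' hle =>
      (hRmem i').mpr (hBlow _ ((hRmem i).mp hi) (i', J) hle le_rfl))
  have hrmem : ∀ i < r, (i, J) ∈ B := fun i hi =>
    (hRmem i).mp (by rw [hRrange]; exact mem_range.mpr hi)
  have hjJ : ∀ j, (∃ i, (i, j) ∈ B) → j ≤ J := by
    rintro j ⟨i, hij⟩
    exact hJle j (Finset.mem_image_of_mem Prod.snd hij)
  have key : ∀ j, (∃ i, (i, j) ∈ B) → ∀ i < r, (i, j) ∈ B := by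
    intro j hj i hi
    exact hBlow (i, J) (hrmem i hi) (i, j) le_rfl (hjJ j hj)
  have hrpos : 0 < r := by
    have h1 : (p0.1, J) ∈ B := by rw [← hp02]; exact hp0
    have : p0.1 ∈ R := (hRmem _).mpr h1
    rw [hRrange, mem_range] at this
    omega
  have h0J : (x 0, y J) ∈ Ξ' := by
    rw [hΞeq]; exact Finset.mem_image_of_mem _ (hrmem 0 hrpos)
  have hJrel : J ∈ {j | ∃ i, (i, j) ∈ B} := ⟨0, hrmem 0 hrpos⟩
  -- row count at y J equals r
  have hfilter : Ξ'.filter (fun p => p.2 = y J) = (range r).image (fun i => (x i, y J)) := by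
    ext p
    simp only [mem_filter, hΞeq, mem_image, mem_range]
    constructor
    · rintro ⟨⟨⟨i, j⟩, hij, rfl⟩, h2⟩
      simp only at h2
      have hj : j = J := hyinj ⟨i, hij⟩ hJrel h2
      subst hj
      have : i ∈ R := (hRmem i).mpr hij
      rw [hRrange, mem_range] at this
      exact ⟨i, this, rfl⟩
    · rintro ⟨i, hi, rfl⟩
      exact ⟨⟨(i, J), hrmem i hi, rfl⟩, rfl⟩
  have hcount : (Ξ'.filter fun p => p.2 = y J).card = r := by
    rw [hfilter, Finset.card_image_of_injOn, card_range]
    intro i hi i' hi' h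
    have h1 : x i = x i' := (Prod.ext_iff.mp h).1
    exact hxinj ⟨J, hrmem i (mem_range.mp hi)⟩ ⟨J, hrmem i' (mem_range.mp hi')⟩ h1
  have hcardA : A.card ≤ r := by
    have := hcard (y J) (Finset.mem_image_of_mem Prod.snd h0J)
    rwa [hcount] at this
  have hAsub : ∀ xb ∈ A, ∃ i < r, x i = xb := by
    intro xb hxb
    have hpt : (xb, y J) ∈ Ξ' := hA xb hxb (y J) ⟨x 0, h0J⟩
    rw [hΞeq, Finset.mem_image] at hpt
    obtain ⟨⟨i, j⟩, hij, heq⟩ := hpt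
    have h1 : x i = xb := (Prod.ext_iff.mp heq).1
    have h2 : y j = y J := (Prod.ext_iff.mp heq).2
    have hj : j = J := hyinj ⟨i, hij⟩ hJrel h2
    subst hj
    have : i ∈ R := (hRmem i).mpr hij
    rw [hRrange, mem_range] at this
    exact ⟨i, this, h1⟩
  -- set of abscissae of the shortest row
  set S : Finset F := (range r).image x with hSdef
  have hScard : S.card = r := by
    rw [hSdef, Finset.card_image_of_injOn, card_range]
    intro i hi i' hi' h
    exact hxinj ⟨J, hrmem i (mem_range.mp hi)⟩ ⟨J, hrmem i' (mem_range.mp hi')⟩ h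
  have hAS : A ⊆ S := by
    intro xb hxb
    obtain ⟨i, hi, rfl⟩ := hAsub xb hxb
    exact Finset.mem_image_of_mem x (mem_range.mpr hi)
  set T : Finset F := S \ A with hTdef
  set L : List F := A.toList ++ T.toList with hLdef
  have hlen : L.length = r := by
    rw [hLdef, List.length_append, Finset.length_toList, Finset.length_toList, hTdef,
      Finset.card_sdiff_of_subset hAS, hScard]
    omega
  have hnd : L.Nodup := by
    rw [hLdef]
    refine List.Nodup.append A.nodup_toList T.nodup_toList ?_
    intro a ha ha'
    rw [Finset.mem_toList] at ha ha'
    exact (Finset.mem_sdiff.mp ha').2 ha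
  have htoF : L.toFinset = S := by
    rw [hLdef, List.toFinset_append, Finset.toList_toFinset, Finset.toList_toFinset, hTdef]
    exact Finset.union_sdiff_of_subset hAS
  set x' : ℕ → F := listSel L x with hx'def
  set y' : ℕ → F := fun j => if j ≤ J then y j else ybar with hy'def
  set Brow : Finset (ℕ × ℕ) := (range A.card).image (fun i => (i, J + 1)) with hBrowdef
  set B' : Finset (ℕ × ℕ) := B ∪ Brow with hB'def
  have hrowmem : ∀ i j, (i, j) ∈ Brow ↔ (i < A.card ∧ j = J + 1) := by
    intro i j
    simp only [hBrowdef, mem_image, mem_range, Prod.ext_iff]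
    constructor
    · rintro ⟨a, ha, rfl, rfl⟩; exact ⟨ha, rfl⟩
    · rintro ⟨h, rfl⟩; exact ⟨i, h, rfl, rfl⟩
  have hrelB' : ∀ i, (∃ j, (i, j) ∈ B') → (∃ j, (i, j) ∈ B) := by
    rintro i ⟨j, hj⟩
    rcases Finset.mem_union.mp hj with h | h
    · exact ⟨j, h⟩
    · exact ⟨J, hrmem i (lt_of_lt_of_le ((hrowmem i j).mp h).1 hcardA)⟩
  have hSx' : (range r).image x' = S := by
    rw [hx'def, listSel_image_range L x r (le_of_eq hlen.symm), ← hlen, List.take_length, htoF]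
  have hAx' : (range A.card).image x' = A := by
    rw [hx'def, listSel_image_range L x A.card (by rw [hlen]; exact hcardA), hLdef,
      show A.card = A.toList.length from (Finset.length_toList A).symm, List.take_left,
      Finset.toList_toFinset]
  have hx'S : ∀ i < r, x' i ∈ S := by
    intro i hi
    rw [← hSx']
    exact Finset.mem_image_of_mem x' (mem_range.mpr hi)
  have hx'eq : ∀ i, ¬ i < r → x' i = x i := by
    intro i hi
    exact listSel_eq L x i (by rw [hlen]; exact hi)
  refine ⟨B', ⟨?_, x', y', ?_, ?_, ?_⟩⟩
  · -- lower set
    rintro ⟨a1, a2⟩ ha ⟨b1, b2⟩ hb1 hb2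
    simp only at hb1 hb2
    rcases Finset.mem_union.mp ha with h | h
    · exact Finset.mem_union_left _ (hBlow _ h (b1, b2) hb1 hb2)
    · obtain ⟨ha1, rfl⟩ := (hrowmem a1 a2).mp h
      by_cases hb : b2 = J + 1
      · exact Finset.mem_union_right _ ((hrowmem b1 b2).mpr ⟨lt_of_le_of_lt hb1 ha1, hb⟩)
      · have hb2' : b2 ≤ J := by omega
        have hb1r : b1 < r := lt_of_le_of_lt hb1 (lt_of_lt_of_le ha1 hcardA)
        exact Finset.mem_union_left _ (hBlow (b1, J) (hrmem b1 hb1r) (b1, b2) le_rfl hb2')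
  · -- x' injective
    intro i hi i' hi' heq
    simp only [Set.mem_setOf_eq] at hi hi'
    have hiB := hrelB' i hi
    have hiB' := hrelB' i' hi'
    by_cases h1 : i < r <;> by_cases h2 : i' < r
    · exact listSel_injOn_range L hnd x (by rw [Set.mem_setOf_eq, hlen]; exact h1)
        (by rw [Set.mem_setOf_eq, hlen]; exact h2) heq
    · exfalso
      have hs : x' i ∈ S := hx'S i h1
      rw [heq, hx'eq i' h2] at hs
      obtain ⟨i₀, hi₀, hx₀⟩ := Finset.mem_image.mp hs
      rw [mem_range] at hi₀
      have : i₀ = i' := hxinj ⟨J, hrmem i₀ hi₀⟩ hiB' hx₀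
      omega
    · exfalso
      have hs : x' i' ∈ S := hx'S i' h2
      rw [← heq, hx'eq i h1] at hs
      obtain ⟨i₀, hi₀, hx₀⟩ := Finset.mem_image.mp hs
      rw [mem_range] at hi₀
      have : i₀ = i := hxinj ⟨J, hrmem i₀ hi₀⟩ hiB hx₀
      omega
    · rw [hx'eq i h1, hx'eq i' h2] at heq
      exact hxinj hiB hiB' heq
  · -- y' injective
    have hyne : ∀ j, (∃ i, (i, j) ∈ B) → y j ≠ ybar := by
      rintro j ⟨i, hij⟩
      exact hy (x i, y j) (by rw [hΞeq]; exact Finset.mem_image_of_mem _ hij)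
    intro j hj j' hj' heq
    simp only [Set.mem_setOf_eq] at hj hj'
    obtain ⟨i, hij⟩ := hj
    obtain ⟨i', hij'⟩ := hj'
    have hcase : ∀ a b, (a, b) ∈ B' → (a, b) ∈ B ∨ b = J + 1 := by
      intro a b hab
      rcases Finset.mem_union.mp hab with h | h
      · exact Or.inl h
      · exact Or.inr ((hrowmem a b).mp h).2
    rcases hcase i j hij with hB1 | rfl <;> rcases hcase i' j' hij' with hB2 | h2
    · have e1 : y' j = y j := if_pos (hjJ j ⟨i, hB1⟩)
      have e2 : y' j' = y j' := if_pos (hjJ j' ⟨i', hB2⟩)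
      rw [e1, e2] at heq
      exact hyinj ⟨i, hB1⟩ ⟨i', hB2⟩ heq
    · exfalso
      subst h2
      have e1 : y' j = y j := if_pos (hjJ j ⟨i, hB1⟩)
      have e2 : y' (J + 1) = ybar := if_neg (by omega)
      rw [e1, e2] at heq
      exact hyne j ⟨i, hB1⟩ heq
    · exfalso
      have e1 : y' j' = y j' := if_pos (hjJ j' ⟨i', hB2⟩)
      have e2 : y' (J + 1) = ybar := if_neg (by omega)
      rw [e1, e2] at heq
      exact hyne j' ⟨i', hB2⟩ heq.symm
    · omega
  · -- image equality
    rw [hB'def, Finset.image_union]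
    have hrowim : Brow.image (fun ij => (x' ij.1, y' ij.2)) = A.image (fun xb => (xb, ybar)) := by
      rw [hBrowdef, Finset.image_image]
      have hyb : y' (J + 1) = ybar := if_neg (by omega)
      have : ((fun ij : ℕ × ℕ => (x' ij.1, y' ij.2)) ∘ (fun i => (i, J + 1)))
          = fun i => (x' i, ybar) := by
        funext i; simp [Function.comp, hyb]
      rw [this]
      calc (range A.card).image (fun i => (x' i, ybar))
          = ((range A.card).image x').image (fun a => (a, ybar)) := by
            rw [Finset.image_image]; rfl
        _ = A.image (fun xb => (xb, ybar)) := by rw [hAx']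
    have hBim : B.image (fun ij => (x' ij.1, y' ij.2)) = Ξ' := by
      ext p
      constructor
      · intro hp
        obtain ⟨⟨i, j⟩, hij, rfl⟩ := Finset.mem_image.mp hp
        have hjJ' : j ≤ J := hjJ j ⟨i, hij⟩
        have hy'j : y' j = y j := if_pos hjJ'
        by_cases hi : i < r
        · have hs : x' i ∈ S := hx'S i hi
          obtain ⟨i₀, hi₀, hxi₀⟩ := Finset.mem_image.mp hs
          rw [mem_range] at hi₀
          rw [hΞeq]
          refine Finset.mem_image.mpr ⟨(i₀, j), key j ⟨i, hij⟩ i₀ hi₀, ?_⟩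
          simp only
          rw [hxi₀, hy'j]
        · rw [hΞeq]
          refine Finset.mem_image.mpr ⟨(i, j), hij, ?_⟩
          simp only
          rw [hx'eq i hi, hy'j]
      · intro hp
        rw [hΞeq] at hp
        obtain ⟨⟨i, j⟩, hij, rfl⟩ := Finset.mem_image.mp hp
        have hjJ' : j ≤ J := hjJ j ⟨i, hij⟩
        have hy'j : y' j = y j := if_pos hjJ'
        by_cases hi : i < r
        · have hs : x i ∈ S := Finset.mem_image_of_mem x (mem_range.mpr hi)
          rw [← hSx'] at hs
          obtain ⟨i₀, hi₀, hxi₀⟩ := Finset.mem_image.mp hs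
          rw [mem_range] at hi₀
          refine Finset.mem_image.mpr ⟨(i₀, j), key j ⟨i, hij⟩ i₀ hi₀, ?_⟩
          simp only
          rw [hxi₀, hy'j]
        · refine Finset.mem_image.mpr ⟨(i, j), hij, ?_⟩
          simp only
          rw [hx'eq i hi, hy'j]
    rw [hrowim, hBim]
end

section
/- Let Ξ = {u_{ij}^x : (i,j) ∈ S_x(Ξ)} ⊂ F² be grouped on horizontal lines per the lower set S_x(Ξ), and let p ∈ F[x,y] be a polynomial of the form p = x^{i_0}y^{j_0} − Σ_{(i,j) ∈ F_{i_0}} a_{ij} x^i y^j where F_{i_0} = {(i,j) ∈ S_x(Ξ) : (i,j) ≺_lex (i_0,j_0)} and 0 ≤ i_0 < m_0, j_0 > n_{i_0}. If p vanishes on Ξ' = {u_{mn}^x : (m,n) ∈ F_{i_0}}, then p vanishes on all of Ξ. -/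
open MvPolynomial Finset

/-- In the setting of points grouped on horizontal lines per the
lower set `S = S_x(Ξ)`, let `p = x^{i₀}y^{j₀} − Σ_{(i,j) ∈ F_{i₀}} a_{ij} x^i y^j`,
where `F_{i₀} = {(i,j) ∈ S : (i,j) ≺_lex (i₀,j₀)}`, `i₀` is smaller than the maximal
first index `m₀` and `j₀` exceeds the height `n_{i₀}` of column `i₀`. If `p`
vanishes at all points indexed by `F_{i₀}`, then `p` vanishes on all of `Ξ`. -/
theorem vanish_on_subset_implies_vanish {F : Type*} [Field F]
    (S : Finset (ℕ × ℕ)) (hS : IsLowerSet2 S)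
    (u : ℕ × ℕ → F × F)
    (hy : ∀ m n, (m, n) ∈ S → (u (m, n)).2 = (u (0, n)).2)
    (hyd : ∀ n n', (0, n) ∈ S → (0, n') ∈ S → (u (0, n)).2 = (u (0, n')).2 → n = n')
    (hxd : ∀ m m' n, (m, n) ∈ S → (m', n) ∈ S → (u (m, n)).1 = (u (m', n)).1 → m = m')
    (i₀ j₀ : ℕ)
    (hi₀ : ∃ q ∈ S, i₀ < q.1)
    (hj₀ : ∀ j, (i₀, j) ∈ S → j < j₀)
    (a : ℕ × ℕ → F)
    (p : MvPolynomial (Fin 2) F)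
    (hp : p = X 0 ^ i₀ * X 1 ^ j₀ -
      ∑ q ∈ S.filter (fun q => toLex q < toLex (i₀, j₀)),
        C (a q) * X 0 ^ q.1 * X 1 ^ q.2)
    (hvan : ∀ q ∈ S.filter (fun q => toLex q < toLex (i₀, j₀)), evalAt (u q) p = 0) :
    ∀ q ∈ S, evalAt (u q) p = 0 := by
  classical
  intro q hq
  by_cases hqF : toLex q < toLex (i₀, j₀)
  · exact hvan q (Finset.mem_filter.mpr ⟨hq, hqF⟩)
  obtain ⟨m, n⟩ := q
  -- i₀ < m
  have hm : i₀ < m := by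
    by_contra h
    push_neg at h
    rcases lt_or_eq_of_le h with h' | h'
    · exact hqF (Prod.Lex.lt_iff.mpr (Or.inl h'))
    · exact hqF (Prod.Lex.lt_iff.mpr (Or.inr ⟨h', hj₀ n (h' ▸ hq)⟩))
  set Fset := S.filter (fun r => toLex r < toLex (i₀, j₀)) with hFset
  set yv := (u (0, n)).2 with hyv
  -- membership of (i, n) in S and in Fset for i ≤ i₀
  have hmemS : ∀ i, i ≤ i₀ → (i, n) ∈ S := fun i hi =>
    hS (m, n) hq (i, n) (le_of_lt (lt_of_le_of_lt hi hm)) le_rfl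
  have hmemF : ∀ i, i ≤ i₀ → (i, n) ∈ Fset := by
    intro i hi
    refine Finset.mem_filter.mpr ⟨hmemS i hi, ?_⟩
    rcases lt_or_eq_of_le hi with h' | h'
    · exact Prod.Lex.lt_iff.mpr (Or.inl h')
    · exact Prod.Lex.lt_iff.mpr (Or.inr ⟨h', hj₀ n (h' ▸ hmemS i hi)⟩)
  -- the univariate polynomial
  set Q : Polynomial F := Polynomial.C (yv ^ j₀) * Polynomial.X ^ i₀ -
      ∑ r ∈ Fset, Polynomial.C (a r * yv ^ r.2) * Polynomial.X ^ r.1 with hQ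
  have hQeval : ∀ t : F, Q.eval t = evalAt (t, yv) p := by
    intro t
    simp only [hQ, hp, evalAt, Polynomial.eval_sub, Polynomial.eval_mul, Polynomial.eval_pow,
      Polynomial.eval_C, Polynomial.eval_X, Polynomial.eval_finset_sum, map_sub, map_sum,
      MvPolynomial.eval_mul, MvPolynomial.eval_pow, MvPolynomial.eval_X, MvPolynomial.eval_C,
      Matrix.cons_val_zero, Matrix.cons_val_one, Matrix.head_cons]
    congr 1
    · ring
    · exact Finset.sum_congr rfl (fun r _ => by ring)
  -- degree bound
  have hdeg : Q.natDegree ≤ i₀ := by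
    refine le_trans (Polynomial.natDegree_sub_le _ _) (max_le ?_ ?_)
    · exact Polynomial.natDegree_C_mul_X_pow_le _ _
    · refine Polynomial.natDegree_sum_le_of_forall_le _ _ (fun r hr => ?_)
      have hr1 : r.1 ≤ i₀ := by
        have := (Finset.mem_filter.mp hr).2
        rcases Prod.Lex.lt_iff.mp this with h' | h'
        · exact le_of_lt h'
        · exact le_of_eq h'.1
      exact le_trans (Polynomial.natDegree_C_mul_X_pow_le _ _) hr1
  -- Q vanishes at i₀ + 1 distinct points
  have hroot : ∀ i, i ≤ i₀ → Q.eval ((u (i, n)).1) = 0 := by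
    intro i hi
    have h2 : (u (i, n)).2 = yv := hy i n (hmemS i hi)
    have := hvan (i, n) (hmemF i hi)
    rw [hQeval, ← h2]
    simpa using this
  have hinj : Function.Injective (fun i : Fin (i₀ + 1) => (u ((i : ℕ), n)).1) := by
    intro i i' hii
    have := hxd i i' n (hmemS i (Nat.lt_succ_iff.mp i.2)) (hmemS i' (Nat.lt_succ_iff.mp i'.2)) hii
    exact Fin.ext this
  have hQ0 : Q = 0 := by
    refine Polynomial.eq_zero_of_natDegree_lt_card_of_eval_eq_zero Q hinj
      (fun i => hroot i (Nat.lt_succ_iff.mp i.2)) ?_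
    simpa using Nat.lt_succ_of_le hdeg
  -- conclude
  have h2 : (u (m, n)).2 = yv := hy m n hq
  have := hQeval ((u (m, n)).1)
  rw [hQ0] at this
  simp only [Polynomial.eval_zero] at this
  rw [← h2] at this
  exact (by simpa using this.symm)
end

section
/- Let Ξ ⊂ F² be finite, S_x(Ξ) its lower set, and F_{i_0} = {(i,j) ∈ S_x(Ξ) : (i,j) ≺_lex (i_0,j_0)} for given (i_0,j_0) with 0 ≤ i_0 < m_0 and j_0 > n_{i_0}. Then the linear system Σ_{(i,j) ∈ F_{i_0}} a_{ij} x_{mn}^i y_{mn}^j = x_{mn}^{i_0} y_{mn}^{j_0}, indexed over the points u_{mn}^x with (m,n) ∈ F_{i_0}, has a unique solution; equivalently, the evaluation matrix of the monomials {x^i y^j : (i,j) ∈ F_{i_0}} at the points {u_{mn}^x : (m,n) ∈ F_{i_0}} is invertible. -/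
open MvPolynomial Finset

lemma aux_lower_nat (s : Finset ℕ) (h : ∀ i ∈ s, ∀ j, j ≤ i → j ∈ s) :
    s = Finset.range s.card := by
  have h1 : ∀ i ∈ s, i < s.card := by
    intro i hi
    have hsub : Finset.range (i + 1) ⊆ s := by
      intro j hj
      exact h i hi j (Nat.lt_succ_iff.mp (Finset.mem_range.mp hj))
    have := Finset.card_le_card hsub
    simpa using this
  have h2 : ∀ i, i < s.card → i ∈ s := by
    intro i hi
    by_contra hmem
    have hsub : s ⊆ Finset.range i := by
      intro j hj
      rw [Finset.mem_range]
      by_contra hji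
      exact hmem (h j hj i (Nat.le_of_not_lt hji))
    have := Finset.card_le_card hsub
    simp only [Finset.card_range] at this
    omega
  ext i
  simp only [Finset.mem_range]
  exact ⟨h1 i, h2 i⟩

lemma aux_core {F : Type*} [Field F] (N : ℕ) :
    ∀ (T : Finset (ℕ × ℕ)), T.card ≤ N → IsLowerSet2 T →
    ∀ (x : ℕ × ℕ → F) (Y : ℕ → F),
    (∀ n n', (0, n) ∈ T → (0, n') ∈ T → Y n = Y n' → n = n') →
    (∀ m m' n, (m, n) ∈ T → (m', n) ∈ T → x (m, n) = x (m', n) → m = m') →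
    ∀ a : ℕ × ℕ → F, (∀ q ∉ T, a q = 0) →
    (∀ q ∈ T, ∑ r ∈ T, a r * x q ^ r.1 * Y q.2 ^ r.2 = 0) →
    ∀ q, a q = 0 := by
  induction N with
  | zero =>
    intro T hcard _ x Y _ _ a ha _ q
    have hT0 : T = ∅ := Finset.card_eq_zero.mp (Nat.le_zero.mp hcard)
    exact ha q (by simp [hT0])
  | succ N ih =>
    intro T hcard hT x Y hY hx a ha hz q
    rcases Finset.eq_empty_or_nonempty T with rfl | ⟨q₀, hq₀⟩
    · exact ha q (by simp)
    have h00 : (0, 0) ∈ T := hT q₀ hq₀ (0, 0) (Nat.zero_le _) (Nat.zero_le _)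
    classical
    -- The bottom-row polynomial
    set I := T.image Prod.fst with hIdef
    set c : ℕ → F := fun i => ∑ r ∈ T.filter (fun r => r.1 = i), a r * Y 0 ^ r.2 with hcdef
    have hgroup : ∀ X : F, ∑ i ∈ I, c i * X ^ i = ∑ r ∈ T, a r * X ^ r.1 * Y 0 ^ r.2 := by
      intro X
      rw [← Finset.sum_fiberwise_of_maps_to (g := Prod.fst) (t := I)
        (fun r hr => Finset.mem_image_of_mem Prod.fst hr)
        (fun r => a r * X ^ r.1 * Y 0 ^ r.2)]
      refine Finset.sum_congr rfl fun i hi => ?_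
      simp only [hcdef]
      rw [Finset.sum_mul]
      refine Finset.sum_congr rfl fun r hr => ?_
      have h1 : r.1 = i := (Finset.mem_filter.mp hr).2
      rw [h1]; ring
    set P0 : Polynomial F := ∑ i ∈ I, Polynomial.C (c i) * Polynomial.X ^ i with hP0def
    have hP0eval : ∀ X : F, P0.eval X = ∑ r ∈ T, a r * X ^ r.1 * Y 0 ^ r.2 := by
      intro X
      rw [← hgroup X, hP0def, Polynomial.eval_finset_sum]
      simp
    have hIlow : ∀ i ∈ I, ∀ j, j ≤ i → j ∈ I := by
      intro i hi j hj
      obtain ⟨r, hr, hri⟩ := Finset.mem_image.mp hi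
      exact Finset.mem_image.mpr ⟨(j, r.2), hT r hr (j, r.2) (by omega) le_rfl, rfl⟩
    have hIr := aux_lower_nat I hIlow
    have h0I : 0 ∈ I := Finset.mem_image.mpr ⟨(0, 0), h00, rfl⟩
    have hcardI : 1 ≤ I.card := Finset.card_pos.mpr ⟨0, h0I⟩
    have hdeg : P0.natDegree < I.card := by
      have h1 : P0.natDegree ≤ I.card - 1 := by
        rw [hP0def]
        refine Polynomial.natDegree_sum_le_of_forall_le _ _ fun i hi => ?_
        have hi' : i < I.card := by rw [hIr] at hi; exact Finset.mem_range.mp hi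
        exact le_trans (Polynomial.natDegree_C_mul_X_pow_le _ _) (by omega)
      omega
    set row0 := T.filter (fun r => r.2 = 0) with hrow0def
    have hrow0I : row0.image Prod.fst = I := by
      ext i
      simp only [hrow0def, hIdef, Finset.mem_image, Finset.mem_filter]
      constructor
      · rintro ⟨r, ⟨hr, _⟩, hri⟩; exact ⟨r, hr, hri⟩
      · rintro ⟨r, hr, hri⟩
        exact ⟨(i, 0), ⟨hT r hr (i, 0) (by omega) (Nat.zero_le _), rfl⟩, rfl⟩
    have hcard_row0 : row0.card = I.card := by
      rw [← hrow0I]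
      refine (Finset.card_image_of_injOn ?_).symm
      intro r hr r' hr' hrr
      have h2 : r.2 = 0 := (Finset.mem_filter.mp hr).2
      have h2' : r'.2 = 0 := (Finset.mem_filter.mp hr').2
      exact Prod.ext hrr (h2.trans h2'.symm)
    have hroots : ∀ v ∈ row0.image x, P0.eval v = 0 := by
      intro v hv
      obtain ⟨r, hr, rfl⟩ := Finset.mem_image.mp hv
      obtain ⟨hrT, h2⟩ := Finset.mem_filter.mp hr
      rw [hP0eval]
      have h0 := hz r hrT
      rw [h2] at h0
      exact h0
    have hcard_roots : (row0.image x).card = I.card := by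
      rw [← hcard_row0]
      refine Finset.card_image_of_injOn ?_
      intro r hr r' hr' hxx
      obtain ⟨hrT, h2⟩ := Finset.mem_filter.mp hr
      obtain ⟨hrT', h2'⟩ := Finset.mem_filter.mp hr'
      have e1 : r = (r.1, 0) := Prod.ext rfl h2
      have e1' : r' = (r'.1, 0) := Prod.ext rfl h2'
      rw [e1] at hrT hxx
      rw [e1'] at hrT' hxx
      rw [e1, e1']
      exact Prod.ext (hx _ _ 0 hrT hrT' hxx) rfl
    have hP0z : P0 = 0 := by
      refine Polynomial.eq_zero_of_natDegree_lt_card_of_eval_eq_zero' P0 (row0.image x) hroots ?_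
      rw [hcard_roots]; exact hdeg
    have hcoeff : ∀ i ∈ I, c i = 0 := by
      intro i hi
      have h1 : P0.coeff i = 0 := by rw [hP0z, Polynomial.coeff_zero]
      rw [hP0def, Polynomial.finset_sum_coeff] at h1
      simp only [Polynomial.coeff_C_mul, Polynomial.coeff_X_pow, mul_ite, mul_one, mul_zero] at h1
      rwa [Finset.sum_ite_eq I i c, if_pos hi] at h1
    have hP0evalz : ∀ X : F, ∑ r ∈ T, a r * X ^ r.1 * Y 0 ^ r.2 = 0 := by
      intro X
      rw [← hP0eval X, hP0z, Polynomial.eval_zero]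
    -- the shifted configuration
    set T1 := (T.filter (fun r => 1 ≤ r.2)).image (fun r => (r.1, r.2 - 1)) with hT1def
    have hT1mem : ∀ s : ℕ × ℕ, s ∈ T1 ↔ (s.1, s.2 + 1) ∈ T := by
      intro s
      constructor
      · intro hs
        obtain ⟨r, hr, hrs⟩ := Finset.mem_image.mp hs
        obtain ⟨hrT, hr2⟩ := Finset.mem_filter.mp hr
        have h1 : r.1 = s.1 := by rw [← hrs]
        have h2 : r.2 - 1 = s.2 := by rw [← hrs]
        have he : (s.1, s.2 + 1) = r := Prod.ext h1.symm (by omega)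
        rwa [he]
      · intro hs
        exact Finset.mem_image.mpr ⟨(s.1, s.2 + 1), Finset.mem_filter.mpr ⟨hs, by omega⟩, by simp⟩
    have hT1low : IsLowerSet2 T1 := by
      intro p hp b hb1 hb2
      rw [hT1mem] at hp ⊢
      exact hT _ hp (b.1, b.2 + 1) hb1 (by omega)
    set a1 : ℕ → ℕ → F := fun i j =>
      ∑ r ∈ T.filter (fun r => r.1 = i ∧ j + 1 ≤ r.2), a r * Y 0 ^ (r.2 - 1 - j) with ha1def
    have ha1supp : ∀ s : ℕ × ℕ, s ∉ T1 → a1 s.1 s.2 = 0 := by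
      intro s hs
      simp only [ha1def]
      refine Finset.sum_eq_zero fun r hr => ?_
      obtain ⟨hrT, hr1, hr2⟩ := Finset.mem_filter.mp hr
      exact absurd ((hT1mem s).mpr (hT r hrT (s.1, s.2 + 1) (by omega) hr2)) hs
    have hswap : ∀ X Yv : F, ∑ s ∈ T1, a1 s.1 s.2 * X ^ s.1 * Yv ^ s.2 =
        ∑ r ∈ T, ∑ j ∈ Finset.range r.2, a r * X ^ r.1 * (Yv ^ j * Y 0 ^ (r.2 - 1 - j)) := by
      intro X Yv
      have e1 : ∀ s ∈ T1, a1 s.1 s.2 * X ^ s.1 * Yv ^ s.2 =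
          ∑ r ∈ T, if r.1 = s.1 ∧ s.2 + 1 ≤ r.2 then
            a r * Y 0 ^ (r.2 - 1 - s.2) * X ^ s.1 * Yv ^ s.2 else 0 := by
        intro s _
        simp only [ha1def]
        rw [Finset.sum_mul, Finset.sum_mul, Finset.sum_filter]
      rw [Finset.sum_congr rfl e1, Finset.sum_comm]
      refine Finset.sum_congr rfl fun r hr => ?_
      rw [← Finset.sum_filter]
      have hfe : T1.filter (fun s => r.1 = s.1 ∧ s.2 + 1 ≤ r.2) =
          (Finset.range r.2).image (fun j => (r.1, j)) := by
        ext s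
        simp only [Finset.mem_filter, Finset.mem_image, Finset.mem_range]
        constructor
        · rintro ⟨hsT1, h1, h2⟩
          exact ⟨s.2, by omega, Prod.ext h1 rfl⟩
        · rintro ⟨j, hj, rfl⟩
          exact ⟨(hT1mem _).mpr (hT r hr (r.1, j + 1) le_rfl hj), rfl, hj⟩
      rw [hfe, Finset.sum_image (by intro p _ q _ h; simpa using (Prod.ext_iff.mp h).2)]
      refine Finset.sum_congr rfl fun j hj => ?_
      ring
    have hB : ∀ X Yv : F,
        ∑ r ∈ T, a r * X ^ r.1 * Yv ^ r.2 =
        (∑ r ∈ T, a r * X ^ r.1 * Y 0 ^ r.2) +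
          (Yv - Y 0) * ∑ s ∈ T1, a1 s.1 s.2 * X ^ s.1 * Yv ^ s.2 := by
      intro X Yv
      rw [hswap X Yv, Finset.mul_sum, ← Finset.sum_add_distrib]
      refine Finset.sum_congr rfl fun r _ => ?_
      rw [← Finset.mul_sum]
      have hg := geom_sum₂_mul Yv (Y 0) r.2
      linear_combination (-(a r * X ^ r.1)) * hg
    -- apply the induction hypothesis to the shifted configuration
    have hcard1 : T1.card ≤ N := by
      have h1 : T1.card ≤ (T.filter (fun r => 1 ≤ r.2)).card := Finset.card_image_le
      have h2 : (T.filter (fun r => 1 ≤ r.2)).card < T.card := by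
        refine Finset.card_lt_card ?_
        refine (Finset.ssubset_iff_of_subset (Finset.filter_subset _ _)).mpr ?_
        exact ⟨(0, 0), h00, by simp⟩
      omega
    have hY1 : ∀ n n', ((0, n) : ℕ × ℕ) ∈ T1 → ((0, n') : ℕ × ℕ) ∈ T1 →
        Y (n + 1) = Y (n' + 1) → n = n' := by
      intro n n' h1 h2 h3
      have := hY (n + 1) (n' + 1) ((hT1mem _).mp h1) ((hT1mem _).mp h2) h3
      omega
    have hx1 : ∀ m m' n, ((m, n) : ℕ × ℕ) ∈ T1 → ((m', n) : ℕ × ℕ) ∈ T1 →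
        x (m, n + 1) = x (m', n + 1) → m = m' := by
      intro m m' n h1 h2 h3
      exact hx m m' (n + 1) ((hT1mem _).mp h1) ((hT1mem _).mp h2) h3
    have hz1 : ∀ s ∈ T1, ∑ r ∈ T1, a1 r.1 r.2 * x (s.1, s.2 + 1) ^ r.1 * Y (s.2 + 1) ^ r.2 = 0 := by
      intro s hs
      have hsT : (s.1, s.2 + 1) ∈ T := (hT1mem s).mp hs
      have h0 : ∑ r ∈ T, a r * x (s.1, s.2 + 1) ^ r.1 * Y (s.2 + 1) ^ r.2 = 0 := hz _ hsT
      rw [hB (x (s.1, s.2 + 1)) (Y (s.2 + 1)), hP0evalz, zero_add] at h0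
      have hne : Y (s.2 + 1) - Y 0 ≠ 0 := by
        intro hcon
        have hYe : Y (s.2 + 1) = Y 0 := sub_eq_zero.mp hcon
        have := hY (s.2 + 1) 0 (hT _ hsT (0, s.2 + 1) (Nat.zero_le _) le_rfl) h00 hYe
        omega
      rcases mul_eq_zero.mp h0 with h | h
      · exact absurd h hne
      · exact h
    have ha1z : ∀ s : ℕ × ℕ, a1 s.1 s.2 = 0 :=
      ih T1 hcard1 hT1low (fun p => x (p.1, p.2 + 1)) (fun n => Y (n + 1)) hY1 hx1
        (fun s => a1 s.1 s.2) ha1supp hz1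
    -- recover the coefficients
    have hrec : ∀ i j : ℕ, a (i, j + 1) = 0 := by
      intro i j
      have h1 : a1 i j = 0 := ha1z (i, j)
      have h2 : a1 i (j + 1) = 0 := ha1z (i, j + 1)
      have key : a1 i j = a (i, j + 1) + Y 0 * a1 i (j + 1) := by
        simp only [ha1def]
        by_cases hmem : (i, j + 1) ∈ T
        · have hnotmem : (i, j + 1) ∉ T.filter (fun r => r.1 = i ∧ (j + 1) + 1 ≤ r.2) := by
            simp
          have hins : T.filter (fun r => r.1 = i ∧ j + 1 ≤ r.2) =
              insert (i, j + 1) (T.filter (fun r => r.1 = i ∧ (j + 1) + 1 ≤ r.2)) := by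
            ext r
            simp only [Finset.mem_filter, Finset.mem_insert]
            constructor
            · rintro ⟨hrT, hr1, hr2⟩
              by_cases hr20 : r.2 = j + 1
              · left; exact Prod.ext hr1 hr20
              · right; exact ⟨hrT, hr1, by omega⟩
            · rintro (rfl | ⟨hrT, hr1, hr2⟩)
              · exact ⟨hmem, rfl, by omega⟩
              · exact ⟨hrT, hr1, by omega⟩
          rw [hins, Finset.sum_insert hnotmem, Finset.mul_sum]
          have e0 : (j + 1) - 1 - j = 0 := by omega
          simp only [e0, pow_zero, mul_one]
          congr 1
          refine Finset.sum_congr rfl fun r hr => ?_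
          have hr2 : (j + 1) + 1 ≤ r.2 := (Finset.mem_filter.mp hr).2.2
          have e1 : r.2 - 1 - j = (r.2 - 1 - (j + 1)) + 1 := by omega
          rw [e1, pow_succ]
          ring
        · have hfe : T.filter (fun r => r.1 = i ∧ j + 1 ≤ r.2) =
              T.filter (fun r => r.1 = i ∧ (j + 1) + 1 ≤ r.2) := by
            ext r
            simp only [Finset.mem_filter]
            constructor
            · rintro ⟨hrT, hr1, hr2⟩
              refine ⟨hrT, hr1, ?_⟩
              rcases Nat.lt_or_ge (j + 1) r.2 with h | h
              · omega
              · exfalso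
                apply hmem
                have he : r = (i, j + 1) := Prod.ext hr1 (by omega)
                rwa [he] at hrT
            · rintro ⟨hrT, hr1, hr2⟩
              exact ⟨hrT, hr1, by omega⟩
          rw [hfe, ha (i, j + 1) hmem, zero_add, Finset.mul_sum]
          refine Finset.sum_congr rfl fun r hr => ?_
          have hr2 : (j + 1) + 1 ≤ r.2 := (Finset.mem_filter.mp hr).2.2
          have e1 : r.2 - 1 - j = (r.2 - 1 - (j + 1)) + 1 := by omega
          rw [e1, pow_succ]
          ring
      rw [h1, h2, mul_zero, add_zero] at key
      exact key.symm
    obtain ⟨i, j⟩ := q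
    cases j with
    | succ j' => exact hrec i j'
    | zero =>
      by_cases hmem : (i, 0) ∈ T
      · have hiI : i ∈ I := Finset.mem_image_of_mem Prod.fst hmem
        have hc0 : ∑ r ∈ T.filter (fun r => r.1 = i), a r * Y 0 ^ r.2 = 0 := by
          have := hcoeff i hiI
          simpa only [hcdef] using this
        have h0 : ∀ r ∈ T.filter (fun r => r.1 = i), r ≠ ((i, 0) : ℕ × ℕ) →
            a r * Y 0 ^ r.2 = 0 := by
          intro r hr hne
          obtain ⟨hrT, hr1⟩ := Finset.mem_filter.mp hr
          have hr2 : r.2 ≠ 0 := fun h => hne (Prod.ext hr1 h)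
          obtain ⟨j', hj'⟩ := Nat.exists_eq_succ_of_ne_zero hr2
          have he : r = (i, j' + 1) := Prod.ext hr1 hj'
          rw [he, hrec i j', zero_mul]
        have hmemf : ((i, 0) : ℕ × ℕ) ∈ T.filter (fun r => r.1 = i) :=
          Finset.mem_filter.mpr ⟨hmem, rfl⟩
        have hsumA : ∑ r ∈ T.filter (fun r => r.1 = i), a r * Y 0 ^ r.2 = a (i, 0) :=
          (Finset.sum_eq_single ((i, 0) : ℕ × ℕ) h0
            (fun hni => absurd hmemf hni)).trans (by simp)
        rw [← hsumA]
        exact hc0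
      · exact ha (i, 0) hmem

/-- In the setting of points grouped on horizontal lines per the
lower set `S = S_x(Ξ)`, with `F_{i₀} = {(i,j) ∈ S : (i,j) ≺_lex (i₀,j₀)}`, `i₀ < m₀`
and `j₀ > n_{i₀}`, the linear system
`Σ_{(i,j) ∈ F_{i₀}} a_{ij} x_{mn}^i y_{mn}^j = x_{mn}^{i₀} y_{mn}^{j₀}`,
`(m,n) ∈ F_{i₀}`, has a unique solution: the evaluation matrix of the monomials
indexed by `F_{i₀}` at the points indexed by `F_{i₀}` is invertible. -/
theorem unique_solution_linear_system {F : Type*} [Field F]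
    (S : Finset (ℕ × ℕ)) (hS : IsLowerSet2 S)
    (u : ℕ × ℕ → F × F)
    (hy : ∀ m n, (m, n) ∈ S → (u (m, n)).2 = (u (0, n)).2)
    (hyd : ∀ n n', (0, n) ∈ S → (0, n') ∈ S → (u (0, n)).2 = (u (0, n')).2 → n = n')
    (hxd : ∀ m m' n, (m, n) ∈ S → (m', n) ∈ S → (u (m, n)).1 = (u (m', n)).1 → m = m')
    (i₀ j₀ : ℕ)
    (hi₀ : ∃ q ∈ S, i₀ < q.1)
    (hj₀ : ∀ j, (i₀, j) ∈ S → j < j₀) :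
    ∃! a : ℕ × ℕ → F,
      (∀ q ∉ S.filter (fun q => toLex q < toLex (i₀, j₀)), a q = 0) ∧
      ∀ q ∈ S.filter (fun q => toLex q < toLex (i₀, j₀)),
        (∑ r ∈ S.filter (fun r => toLex r < toLex (i₀, j₀)),
            a r * (u q).1 ^ r.1 * (u q).2 ^ r.2) =
          (u q).1 ^ i₀ * (u q).2 ^ j₀ := by
    classical
    set T := S.filter (fun q => toLex q < toLex (i₀, j₀)) with hTdef
    have hTsub : ∀ q ∈ T, q ∈ S := fun q hq => (Finset.mem_filter.mp hq).1
    have hTlow : IsLowerSet2 T := by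
      intro p hp b h1 h2
      obtain ⟨hpS, hplex⟩ := Finset.mem_filter.mp hp
      refine Finset.mem_filter.mpr ⟨hS p hpS b h1 h2, ?_⟩
      rw [Prod.Lex.lt_iff] at hplex ⊢
      rcases hplex with h | ⟨he, hj⟩
      · exact Or.inl (lt_of_le_of_lt h1 h)
      · rcases Nat.lt_or_ge b.1 i₀ with hb | hb
        · exact Or.inl hb
        · exact Or.inr ⟨by simp only [ofLex_toLex] at *; omega, by simp only [ofLex_toLex] at *; omega⟩
    set M : Matrix {q // q ∈ T} {q // q ∈ T} F :=
      fun p r => (u p.1).1 ^ (r.1).1 * (u p.1).2 ^ (r.1).2 with hMdef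
    have hconv : ∀ (w : {q // q ∈ T} → F) (aa : ℕ × ℕ → F),
        (∀ r : {q // q ∈ T}, w r = aa r.1) →
        ∀ (p : ℕ × ℕ) (hp : p ∈ T),
        M.mulVec w ⟨p, hp⟩ = ∑ r ∈ T, aa r * (u p).1 ^ r.1 * (u p).2 ^ r.2 := by
      intro w aa hwa p hp
      rw [Matrix.mulVec, dotProduct,
        ← Finset.sum_coe_sort T (fun r => aa r * (u p).1 ^ r.1 * (u p).2 ^ r.2)]
      refine Finset.sum_congr rfl fun r _ => ?_
      rw [hwa r, hMdef]
      ring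
    have hker : ∀ v : {q // q ∈ T} → F, M.mulVec v = 0 → v = 0 := by
      intro v hv
      set aa : ℕ × ℕ → F := fun p => if h : p ∈ T then v ⟨p, h⟩ else 0 with haadef
      have haa : ∀ r : {q // q ∈ T}, v r = aa r.1 := by
        intro r
        simp only [haadef]
        rw [dif_pos r.2]
      have ha0 : ∀ p, aa p = 0 := by
        refine aux_core T.card T le_rfl hTlow (fun p => (u p).1) (fun n => (u (0, n)).2)
          ?_ ?_ aa ?_ ?_
        · intro n n' h1 h2 h3
          exact hyd n n' (hTsub _ h1) (hTsub _ h2) h3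
        · intro m m' n h1 h2 h3
          exact hxd m m' n (hTsub _ h1) (hTsub _ h2) h3
        · intro p hp
          simp only [haadef]
          rw [dif_neg hp]
        · intro p hp
          have h1 := congrFun hv ⟨p, hp⟩
          rw [hconv v aa haa p hp] at h1
          have h2 : (u p).2 = (u (0, p.2)).2 := hy p.1 p.2 (by simpa using hTsub p hp)
          simp only [Pi.zero_apply] at h1
          show ∑ r ∈ T, aa r * (u p).1 ^ r.1 * (u (0, p.2)).2 ^ r.2 = 0
          rw [← h2]
          exact h1
      funext r
      rw [haa r, ha0 r.1]
      rfl
    have hinj : Function.Injective M.mulVecLin := by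
      rw [← LinearMap.ker_eq_bot, LinearMap.ker_eq_bot']
      intro v hv
      exact hker v (by simpa using hv)
    have hsurj := LinearMap.injective_iff_surjective.mp hinj
    obtain ⟨v₀, hv₀⟩ := hsurj (fun p : {q // q ∈ T} => (u p.1).1 ^ i₀ * (u p.1).2 ^ j₀)
    have hv₀' : M.mulVec v₀ = fun p : {q // q ∈ T} => (u p.1).1 ^ i₀ * (u p.1).2 ^ j₀ := by
      simpa using hv₀
    set a₀ : ℕ × ℕ → F := fun p => if h : p ∈ T then v₀ ⟨p, h⟩ else 0 with ha₀def
    have ha₀v : ∀ r : {q // q ∈ T}, v₀ r = a₀ r.1 := by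
      intro r
      simp only [ha₀def]
      rw [dif_pos r.2]
    refine ⟨a₀, ⟨?_, ?_⟩, ?_⟩
    · intro p hp
      simp only [ha₀def]
      rw [dif_neg hp]
    · intro p hp
      have h1 := congrFun hv₀' ⟨p, hp⟩
      rw [hconv v₀ a₀ ha₀v p hp] at h1
      exact h1
    · intro a' ⟨ha'supp, ha'eq⟩
      set v' : {q // q ∈ T} → F := fun r => a' r.1 with hv'def
      have hv'a : ∀ r : {q // q ∈ T}, v' r = a' r.1 := fun r => rfl
      have hMv' : M.mulVec v' = fun p : {q // q ∈ T} => (u p.1).1 ^ i₀ * (u p.1).2 ^ j₀ := by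
        funext p
        rw [hconv v' a' hv'a p.1 p.2]
        exact ha'eq p.1 p.2
      have hvv : v' = v₀ := by
        apply hinj
        rw [Matrix.mulVecLin_apply, Matrix.mulVecLin_apply, hMv', hv₀']
      funext p
      by_cases hp : p ∈ T
      · have : a' p = v' ⟨p, hp⟩ := rfl
        rw [this, hvv, ha₀v ⟨p, hp⟩]
      · rw [ha'supp p hp]
        simp only [ha₀def]
        rw [dif_neg hp]
end
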